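/- Let A be a symmetric nonnegative n×n matrix and P a permutation matrix such that PᵀAP = [[A₁₁],[A₂₁]]·[I_k, Q] for some nonnegative matrix Q ∈ ℝ₊^{k×(n−k)}. Then st₊(A) ≤ k. -/

import Mathlib

open Matrix

noncomputable def sntRank {m : Type*} [Fintype m] (A : Matrix m m ℝ) : ℕ :=
  sInf {k : ℕ | ∃ B : Matrix m (Fin k) ℝ, ∃ C : Matrix (Fin k) (Fin k) ℝ,
    (∀ i j, 0 ≤ B i j) ∧ (∀ i j, 0 ≤ C i j) ∧ C.IsSymm ∧ A = B * C * Bᵀ}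

theorem stmt_11 {k l : ℕ} (A : Matrix (Fin (k + l)) (Fin (k + l)) ℝ)
    (hA : A.IsSymm) (hApos : ∀ i j, 0 ≤ A i j)
    (P : Matrix (Fin (k + l)) (Fin (k + l)) ℝ)
    (hP : ∃ σ : Equiv.Perm (Fin (k + l)), ∀ i j, P i j = if σ j = i then 1 else 0)
    (A₁₁ : Matrix (Fin k) (Fin k) ℝ) (A₂₁ : Matrix (Fin l) (Fin k) ℝ)
    (Q : Matrix (Fin k) (Fin l) ℝ) (hQ : ∀ i j, 0 ≤ Q i j)
    (hfact : (Pᵀ * A * P).submatrix finSumFinEquiv finSumFinEquiv =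
      Matrix.fromRows A₁₁ A₂₁ * Matrix.fromCols (1 : Matrix (Fin k) (Fin k) ℝ) Q) :
    sntRank A ≤ k := by
  obtain ⟨σ, hσ⟩ := hP
  have hPP : P * Pᵀ = 1 := by
    ext i j
    simp only [Matrix.mul_apply, Matrix.transpose_apply, hσ, Matrix.one_apply]
    simp only [Equiv.apply_eq_iff_eq_symm_apply]
    simp [ite_and, Finset.sum_ite_eq', Equiv.symm_apply_eq, eq_comm]
  -- the permuted matrix
  set e : Fin k ⊕ Fin l ≃ Fin (k + l) := finSumFinEquiv with he
  have hMsymm : (Pᵀ * A * P).IsSymm := by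
    unfold Matrix.IsSymm
    rw [Matrix.transpose_mul, Matrix.transpose_mul, Matrix.transpose_transpose, hA.eq,
      Matrix.mul_assoc]
  have hfb : (Pᵀ * A * P).submatrix e e =
      fromBlocks A₁₁ (A₁₁ * Q) A₂₁ (A₂₁ * Q) := by
    rw [hfact, fromRows_mul_fromCols, Matrix.mul_one, Matrix.mul_one]
  have hfbsymm : ((Pᵀ * A * P).submatrix e e).IsSymm := by
    unfold Matrix.IsSymm
    rw [Matrix.transpose_submatrix, hMsymm.eq]
  rw [hfb] at hfbsymm
  have hsymm' := hfbsymm.eq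
  rw [Matrix.fromBlocks_transpose] at hsymm'
  have h11 : A₁₁ᵀ = A₁₁ := by
    have := congrArg Matrix.toBlocks₁₁ hsymm'
    simpa [Matrix.toBlocks_fromBlocks₁₁] using this
  have h21 : (A₁₁ * Q)ᵀ = A₂₁ := by
    have := congrArg Matrix.toBlocks₂₁ hsymm'
    simpa [Matrix.toBlocks_fromBlocks₂₁] using this
  -- key factorization of the permuted matrix
  set F : Matrix (Fin k ⊕ Fin l) (Fin k) ℝ := fromRows 1 Qᵀ with hF
  have hkey : F * A₁₁ * Fᵀ = fromBlocks A₁₁ (A₁₁ * Q) A₂₁ (A₂₁ * Q) := by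
    rw [hF, Matrix.transpose_fromRows, Matrix.transpose_one, Matrix.transpose_transpose,
      fromRows_mul, Matrix.one_mul, fromRows_mul_fromCols, Matrix.mul_one, Matrix.mul_one]
    have hq : Qᵀ * A₁₁ = A₂₁ := by
      rw [← h21, Matrix.transpose_mul, h11]
    rw [hq]
  -- express A
  have hAeq : A = P * ((Pᵀ * A * P).submatrix e e).submatrix e.symm e.symm * Pᵀ := by
    rw [Matrix.submatrix_submatrix, Equiv.self_comp_symm, Matrix.submatrix_id_id]
    simp only [← Matrix.mul_assoc]
    rw [hPP, Matrix.one_mul, Matrix.mul_assoc, hPP, Matrix.mul_one]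
  set B : Matrix (Fin (k + l)) (Fin k) ℝ := P * F.submatrix e.symm id with hB
  have hfactA : A = B * A₁₁ * Bᵀ := by
    rw [hB, Matrix.transpose_mul, Matrix.transpose_submatrix]
    show A = P * F.submatrix (⇑e.symm) id * A₁₁ * (Fᵀ.submatrix id ⇑e.symm * Pᵀ)
    have h1 : F.submatrix e.symm id * A₁₁ = (F * A₁₁).submatrix e.symm id := by
      have := Matrix.submatrix_mul_equiv F A₁₁ (⇑e.symm) (Equiv.refl (Fin k)) id
      simpa using this
    have h2 : (F * A₁₁).submatrix e.symm id * Fᵀ.submatrix id e.symm =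
        (F * A₁₁ * Fᵀ).submatrix e.symm e.symm := by
      have := Matrix.submatrix_mul_equiv (F * A₁₁) Fᵀ (⇑e.symm) (Equiv.refl (Fin k)) (⇑e.symm)
      simpa using this
    calc A = P * ((Pᵀ * A * P).submatrix e e).submatrix e.symm e.symm * Pᵀ := hAeq
      _ = P * (F * A₁₁ * Fᵀ).submatrix e.symm e.symm * Pᵀ := by rw [hfb, hkey]
      _ = P * (F.submatrix e.symm id * A₁₁ * Fᵀ.submatrix id e.symm) * Pᵀ := by
          rw [h1, h2]
      _ = _ := by simp only [Matrix.mul_assoc]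
  -- nonnegativity of B
  have hFpos : ∀ i j, 0 ≤ F i j := by
    rintro (i | i) j <;> simp [hF, Matrix.fromRows_apply_inl, Matrix.fromRows_apply_inr, Matrix.one_apply] <;> first
      | positivity | exact hQ j i
  have hBpos : ∀ i j, 0 ≤ B i j := by
    intro i j
    rw [hB, Matrix.mul_apply]
    apply Finset.sum_nonneg
    intro t _
    have hP0 : 0 ≤ P i t := by rw [hσ]; positivity
    exact mul_nonneg hP0 (hFpos _ _)
  -- nonnegativity of A₁₁
  have hMpos : ∀ i j, 0 ≤ (Pᵀ * A * P) i j := by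
    intro i j
    rw [Matrix.mul_apply]
    apply Finset.sum_nonneg
    intro t _
    apply mul_nonneg _ (by rw [hσ]; positivity)
    rw [Matrix.mul_apply]
    apply Finset.sum_nonneg
    intro s _
    exact mul_nonneg (by simp only [Matrix.transpose_apply]; rw [hσ]; positivity) (hApos _ _)
  have hA11pos : ∀ i j, 0 ≤ A₁₁ i j := by
    intro i j
    have := hMpos (e (Sum.inl i)) (e (Sum.inl j))
    have h := congrFun (congrFun hfb (Sum.inl i)) (Sum.inl j)
    simp only [Matrix.submatrix_apply] at h
    rw [h] at this
    simpa [Matrix.fromBlocks] using this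
  exact Nat.sInf_le ⟨B, A₁₁, hBpos, hA11pos, h11, hfactA⟩
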